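/- Let [{s₁}|{t₁}] and [{s₂}|{t₂}] be elements of B₁. Then [{s₁}|{t₁}] ⋆ [{s₂}|{t₂}] equals: x_{s₁}[{s₂}|{t₂,t₁}] + x_{t₂}[{s₁,s₂}|{t₁}] if t₁ > t₂ and s₁ < s₂; x_{s₁}[{s₂}|{t₂,t₁}] if t₁ > t₂ and s₁ = s₂; x_{s₁}[{s₂}|{t₂,t₁}] − x_{t₂}[{s₂,s₁}|{t₁}] if t₁ > t₂ and s₁ > s₂; x_{t₁}[{s₁,s₂}|{t₂}] if t₁ = t₂ and s₁ < s₂; 0 if t₁ = t₂ and s₁ = s₂; −x_{t₂}[{s₂,s₁}|{t₁}] if t₁ = t₂ and s₁ > s₂; x_{t₁}[{s₁,s₂}|{t₂}] − x_{s₂}[{s₁}|{t₁,t₂}] if t₁ < t₂ and s₁ < s₂; −x_{s₂}[{s₁}|{t₁,t₂}] if t₁ < t₂ and s₁ = s₂; −x_{s₂}[{s₁}|{t₁,t₂}] − x_{t₁}[{s₂,s₁}|{t₂}] if t₁ < t₂ and s₁ > s₂. In particular, all symbols appearing on the right-hand sides are genuine elements of B₂. -/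

import Mathlib

open Classical MvPolynomial Finsupp TensorProduct

set_option maxHeartbeats 1600000

noncomputable section

namespace EdgeRes

/-- A "cell" `(σ, τ)`: a pair of finite sets of vertices, representing the symbol `[σ|τ]`. -/
abbrev Cell (n : ℕ) := Finset (Fin n) × Finset (Fin n)

/-- The cointerval graph of the intervals `[a i, b i]`: distinct vertices are adjacent
iff the corresponding closed intervals are disjoint. -/
def cigraph (n : ℕ) (a b : Fin n → ℝ) : SimpleGraph (Fin n) where
  Adj i j := i ≠ j ∧ Disjoint (Set.Icc (a i) (b i)) (Set.Icc (a j) (b j))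
  symm := by constructor; intro i j h; exact ⟨h.1.symm, h.2.symm⟩
  loopless := by constructor; intro i h; exact h.1 rfl

variable {n : ℕ}

/-- The homological degree of a cell: `|σ| + |τ| - 1`. -/
def cellDeg (e : Cell n) : ℕ := e.1.card + e.2.card - 1

/-- `e = (σ, τ)` is a basis cell: either the degree-0 cell `(∅, ∅)` (representing `1 ∈ B₀`),
or `σ, τ` are disjoint and nonempty, `max σ < min τ`, and every `i ∈ σ` is adjacent
to `min τ` in `G`. -/
def IsBasisCell (G : SimpleGraph (Fin n)) (e : Cell n) : Prop :=
  e = (∅, ∅) ∨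
  (e.1.Nonempty ∧ e.2.Nonempty ∧ Disjoint e.1 e.2 ∧
   (∀ i ∈ e.1, ∀ j ∈ e.2, i < j) ∧
   (∀ i ∈ e.1, ∀ j ∈ e.2, (∀ j' ∈ e.2, j ≤ j') → G.Adj i j))

/-- `e ∈ B_d`. -/
def InB (G : SimpleGraph (Fin n)) (d : ℕ) (e : Cell n) : Prop :=
  IsBasisCell G e ∧ cellDeg e = d

/-- The underlying module of the resolution: the free `S`-module on all cells (the
resolution `F` is the submodule family spanned by the basis cells of each degree). -/
abbrev Ftot (n : ℕ) (k : Type) [Field k] := Cell n →₀ MvPolynomial (Fin n) k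

variable (G : SimpleGraph (Fin n)) (k : Type) [Field k]

/-- The basis vector corresponding to a cell, where symbols that are not genuine
basis elements are interpreted as `0`. -/
def sym (e : Cell n) : Ftot n k :=
  if IsBasisCell G e then Finsupp.single e 1 else 0

/-- The differential on a basis cell: `d[{i}|{j}] = x_i x_j`, and for `|σ|+|τ| ≥ 3`,
`d[σ|τ] = Σ_{i∈σ} (−1)^{|τ|+|{j∈σ : j>i}|} x_i [σ∖i|τ] + Σ_{i∈τ} (−1)^{|{j∈τ : j>i}|} x_i [σ|τ∖i]`. -/
def diffCell (e : Cell n) : Ftot n k :=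
  if IsBasisCell G e then
    if e.1.card + e.2.card = 2 then
      (∏ i ∈ e.1 ∪ e.2, (X i : MvPolynomial (Fin n) k)) • sym G k ((∅, ∅) : Cell n)
    else if 3 ≤ e.1.card + e.2.card then
      (∑ i ∈ e.1,
        (((-1 : MvPolynomial (Fin n) k) ^ (e.2.card + (e.1.filter fun j => i < j).card)) * X i) •
          sym G k (e.1.erase i, e.2))
      + (∑ i ∈ e.2,
        (((-1 : MvPolynomial (Fin n) k) ^ ((e.2.filter fun j => i < j).card)) * X i) •
          sym G k (e.1, e.2.erase i))
    else 0
  else 0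

/-- The differential, as an `S`-linear endomorphism of the total module (it is zero in
degree `0` and on non-basis cells). -/
def Dmap : Ftot n k →ₗ[MvPolynomial (Fin n) k] Ftot n k :=
  Finsupp.lsum ℕ fun e => LinearMap.smulRight LinearMap.id (diffCell G k e)

/-- The submodule `F_d`: the span of the basis cells in `B_d`.  (`F` is the direct sum of
these, and `F_0 = S·[∅|∅] ≅ S`.) -/
def Fsub (d : ℕ) : Submodule (MvPolynomial (Fin n) k) (Ftot n k) :=
  Submodule.span _ {f : Ftot n k | ∃ e : Cell n, InB G d e ∧ f = Finsupp.single e 1}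

/-- The edge ideal `I_G`, generated by the `x_i x_j` for edges `ij` of `G`. -/
def edgeIdeal : Ideal (MvPolynomial (Fin n) k) :=
  Ideal.span {m | ∃ i j : Fin n, G.Adj i j ∧ m = X i * X j}

/-- The irrelevant maximal ideal `(x_1, …, x_n)`. -/
def irrIdeal (n : ℕ) (k : Type) [Field k] : Ideal (MvPolynomial (Fin n) k) :=
  Ideal.span (Set.range fun i : Fin n => (X i : MvPolynomial (Fin n) k))

/-- The set of pairs `(i, j)` with `i < j`, `ij ∈ E(G)`, and `x_i x_j ∣ x^α`; i.e. the
elements `[{i}|{j}]` of `B₁` whose monomial divides `x^α`. -/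
def DvdSet (α : Fin n →₀ ℕ) : Finset (Fin n × Fin n) :=
  Finset.univ.filter fun p => p.1 < p.2 ∧ G.Adj p.1 p.2 ∧ 1 ≤ α p.1 ∧ 1 ≤ α p.2

/-- `c` on a monomial `x^α ∈ F_0 = S`: zero if `x^α ∉ I_G`; otherwise
`(x^α/(x_i x_j))·[{i}|{j}]` for the `≺`-minimal `[{i}|{j}] ∈ B₁` with `x_i x_j ∣ x^α`
(i.e. `j` is largest possible and then `i` smallest possible). -/
def cZero (α : Fin n →₀ ℕ) : Ftot n k :=
  if h : (DvdSet G α).Nonempty then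
    let t := ((DvdSet G α).image Prod.snd).max' (h.image _)
    if h2 : ((((DvdSet G α).filter fun p => p.2 = t)).image Prod.fst).Nonempty then
      let s := ((((DvdSet G α).filter fun p => p.2 = t)).image Prod.fst).min' h2
      (monomial (α - Finsupp.single s 1 - Finsupp.single t 1) (1 : k)) • sym G k ({s}, {t})
    else 0
  else 0

/-- `C₁ = {i ∈ supp α : i > max τ}`. -/
def C1set (τ : Finset (Fin n)) (α : Fin n →₀ ℕ) : Finset (Fin n) :=
  α.support.filter fun i => ∀ j ∈ τ, j < i

/-- `C₂ = {i ∈ supp α : i < min σ, {i, min τ} ∈ E(G)}`. -/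
def C2set (σ τ : Finset (Fin n)) (α : Fin n →₀ ℕ) : Finset (Fin n) :=
  α.support.filter fun i =>
    (∀ s ∈ σ, i < s) ∧ ∀ j ∈ τ, (∀ j' ∈ τ, j ≤ j') → G.Adj i j

/-- `C₃ = {i ∈ supp α : i < min σ, i < max supp α, {i, max supp α} ∈ E(G)}`. -/
def C3set (σ : Finset (Fin n)) (α : Fin n →₀ ℕ) : Finset (Fin n) :=
  α.support.filter fun i =>
    (∀ s ∈ σ, i < s) ∧ ∀ m ∈ α.support, (∀ m' ∈ α.support, m' ≤ m) → (i < m ∧ G.Adj i m)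

/-- The value of the contracting homotopy `c` on the `k`-basis vector `x^α·e`. -/
def cMono (e : Cell n) (α : Fin n →₀ ℕ) : Ftot n k :=
  if IsBasisCell G e then
    if hτ : e.2.Nonempty then
      if e.2.card = 1 then
        -- `τ = {t}`
        let t := e.2.max' hτ
        if h1 : (C1set e.2 α).Nonempty then
          let m1 := (C1set e.2 α).max' h1
          (monomial (α - Finsupp.single m1 1) (1 : k)) • sym G k (e.1, insert m1 e.2)
          + (if h3 : (C3set G e.1 α).Nonempty then
              let m3 := (C3set G e.1 α).min' h3
              ((-1 : MvPolynomial (Fin n) k) ^ (e.1.card + 1)) •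
                ((monomial (α + Finsupp.single t 1 - Finsupp.single m1 1 - Finsupp.single m3 1)
                    (1 : k)) • sym G k (insert m3 e.1, ({m1} : Finset (Fin n))))
            else 0)
        else
          if h2 : (C2set G e.1 e.2 α).Nonempty then
            let m2 := (C2set G e.1 e.2 α).min' h2
            ((-1 : MvPolynomial (Fin n) k) ^ (e.1.card + 1)) •
              ((monomial (α - Finsupp.single m2 1) (1 : k)) • sym G k (insert m2 e.1, e.2))
          else 0
      else
        -- `|τ| ≥ 2`
        if h1 : (C1set e.2 α).Nonempty then
          let m1 := (C1set e.2 α).max' h1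
          (monomial (α - Finsupp.single m1 1) (1 : k)) • sym G k (e.1, insert m1 e.2)
        else 0
    else cZero G k α  -- the degree-0 basis cell `(∅, ∅)`
  else 0

/-- The `k`-basis of the total module, indexed by pairs (cell, monomial exponent). -/
def FBasis (n : ℕ) (k : Type) [Field k] :
    Module.Basis ((_ : Cell n) × (Fin n →₀ ℕ)) k (Ftot n k) :=
  Finsupp.basis fun _ => MvPolynomial.basisMonomials (Fin n) k

/-- The contracting homotopy `c`, as a `k`-linear endomorphism of the total module. -/
def Cmap : Ftot n k →ₗ[k] Ftot n k :=
  (FBasis n k).constr ℕ fun p => cMono G k p.1 p.2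

/-- The `S`-bilinear extension of a map defined on pairs of cells. -/
def biext (b : Cell n → Cell n → Ftot n k) (f g : Ftot n k) : Ftot n k :=
  ∑ e₁ ∈ f.support, ∑ e₂ ∈ g.support, (f e₁ * g e₂) • b e₁ e₂

/-- The product of two basis cells, defined recursively (with fuel, which suffices as each
recursive step lowers the total degree): `1 ⋆ 1 = 1`, and for `p + q ≥ 1`,
`e₁ ⋆ e₂ = c((d e₁) ⋆ e₂) + (−1)^p c(e₁ ⋆ (d e₂))`. -/
def bstar : ℕ → Cell n → Cell n → Ftot n k
  | 0, _, _ => 0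
  | N + 1, e₁, e₂ =>
    if cellDeg e₁ + cellDeg e₂ = 0 then Finsupp.single ((∅, ∅) : Cell n) 1
    else
      Cmap G k (biext k (fun a b => bstar N a b) (Dmap G k (Finsupp.single e₁ 1)) (Finsupp.single e₂ 1))
      + ((-1 : MvPolynomial (Fin n) k) ^ cellDeg e₁) •
          Cmap G k (biext k (fun a b => bstar N a b) (Finsupp.single e₁ 1) (Dmap G k (Finsupp.single e₂ 1)))

/-- The product `⋆` on the resolution, extended `S`-bilinearly from basis cells. -/
def pstar (f g : Ftot n k) : Ftot n k := biext k (bstar G k (4 * n + 4)) f g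

/-- The map `∂` on a basis cell: `∂[{i}|{j}] = x_i x_j`, and for `|σ|+|τ| ≥ 3`,
`∂[σ|τ] = x_{max τ}[σ|τ∖max τ] − (−1)^{|τ|+|σ|} x_{min σ}[σ∖min σ|τ]`. -/
def partialCell (e : Cell n) : Ftot n k :=
  if IsBasisCell G e then
    if e.1.card + e.2.card = 2 then
      (∏ i ∈ e.1 ∪ e.2, (X i : MvPolynomial (Fin n) k)) • sym G k ((∅, ∅) : Cell n)
    else if 3 ≤ e.1.card + e.2.card then
      if h1 : e.1.Nonempty then
        if h2 : e.2.Nonempty then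
          (X (e.2.max' h2) : MvPolynomial (Fin n) k) • sym G k (e.1, e.2.erase (e.2.max' h2))
          - ((-1 : MvPolynomial (Fin n) k) ^ (e.2.card + e.1.card)) •
              ((X (e.1.min' h1) : MvPolynomial (Fin n) k) •
                sym G k (e.1.erase (e.1.min' h1), e.2))
        else 0
      else 0
    else 0
  else 0

/-- The map `∂`, as an `S`-linear endomorphism of the total module. -/
def Pmap : Ftot n k →ₗ[MvPolynomial (Fin n) k] Ftot n k :=
  Finsupp.lsum ℕ fun e => LinearMap.smulRight LinearMap.id (partialCell G k e)

/-- The `k`-linear projection `π` of `S` fixing each monomial not in `I_G` and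
annihilating each monomial in `I_G`. -/
def piMap : MvPolynomial (Fin n) k →ₗ[k] MvPolynomial (Fin n) k :=
  (MvPolynomial.basisMonomials (Fin n) k).constr ℕ fun α =>
    if monomial α (1 : k) ∈ edgeIdeal G k then 0 else monomial α (1 : k)

/-- The `ℕⁿ`-multidegree of the basis vector `x^α [σ|τ]`: `α + Σ_{i ∈ σ∪τ} eᵢ`. -/
def mdeg (e : Cell n) (α : Fin n →₀ ℕ) : Fin n →₀ ℕ :=
  α + ∑ i ∈ e.1 ∪ e.2, Finsupp.single i 1

/-- The `μ`-homogeneous component of the resolution (as a `k`-subspace). -/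
def Hsub (μ : Fin n →₀ ℕ) : Submodule k (Ftot n k) :=
  Submodule.span k {f : Ftot n k |
    ∃ (e : Cell n) (α : Fin n →₀ ℕ), IsBasisCell G e ∧ mdeg e α = μ ∧
      f = Finsupp.single e (monomial α (1 : k))}

section Lemmas

variable {n : ℕ} {a b : Fin n → ℝ}

lemma adj_b_lt (hab : ∀ i, a i ≤ b i) (hmono : ∀ i j : Fin n, i < j → a i ≤ a j)
    {s t : Fin n} (h : (cigraph n a b).Adj s t) (hst : s < t) : b s < a t := by
  by_contra hle
  push_neg at hle
  refine Set.not_disjoint_iff.2 ⟨a t, ?_, ?_⟩ h.2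
  · exact Set.mem_Icc.2 ⟨hmono s t hst, hle⟩
  · exact Set.mem_Icc.2 ⟨le_rfl, hab t⟩

lemma adj_mono (hab : ∀ i, a i ≤ b i) (hmono : ∀ i j : Fin n, i < j → a i ≤ a j)
    {s t t' : Fin n} (h : (cigraph n a b).Adj s t) (hst : s < t) (htt : t ≤ t') :
    (cigraph n a b).Adj s t' := by
  have hb1 : b s < a t' := by
    rcases eq_or_lt_of_le htt with rfl | hlt
    · exact adj_b_lt hab hmono h hst
    · exact lt_of_lt_of_le (adj_b_lt hab hmono h hst) (hmono _ _ hlt)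
  refine ⟨ne_of_lt (lt_of_lt_of_le hst htt), ?_⟩
  rw [Set.disjoint_left]
  rintro x ⟨_, hx2⟩ ⟨hx3, _⟩
  exact absurd (lt_of_le_of_lt hx2 hb1) (not_lt.2 hx3)

variable {G : SimpleGraph (Fin n)} {k : Type} [Field k]

lemma isBasisCell_pair {s t : Fin n} (hst : s < t) (hadj : G.Adj s t) :
    IsBasisCell G (({s}, {t}) : Cell n) := by
  refine Or.inr ⟨⟨s, Finset.mem_singleton_self s⟩, ⟨t, Finset.mem_singleton_self t⟩, ?_, ?_, ?_⟩
  · simpa using (ne_of_lt hst)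
  · intro i hi j hj
    rw [Finset.mem_singleton] at hi hj; subst hi; subst hj; exact hst
  · intro i hi j hj _
    rw [Finset.mem_singleton] at hi hj; subst hi; subst hj; exact hadj

lemma isBasisCell_two_one {u s t : Fin n} (hus : u ≠ s) (hut : u < t) (hst : s < t)
    (hadju : G.Adj u t) (hadjs : G.Adj s t) :
    IsBasisCell G ((insert u {s}, {t}) : Cell n) := by
  refine Or.inr ⟨⟨u, Finset.mem_insert_self u _⟩, ⟨t, Finset.mem_singleton_self t⟩, ?_, ?_, ?_⟩
  · rw [Finset.disjoint_right]
    intro x hx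
    rw [Finset.mem_singleton] at hx; subst hx
    simp only [Finset.mem_insert, Finset.mem_singleton]
    push_neg
    exact ⟨(ne_of_lt hut).symm, (ne_of_lt hst).symm⟩
  · intro i hi j hj
    rw [Finset.mem_singleton] at hj; subst hj
    rcases Finset.mem_insert.1 hi with rfl | hi
    · exact hut
    · rw [Finset.mem_singleton] at hi; subst hi; exact hst
  · intro i hi j hj _
    rw [Finset.mem_singleton] at hj; subst hj
    rcases Finset.mem_insert.1 hi with rfl | hi
    · exact hadju
    · rw [Finset.mem_singleton] at hi; subst hi; exact hadjs

lemma isBasisCell_one_two {s t v : Fin n} (hst : s < t) (htv : t < v) (hadj : G.Adj s t) :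
    IsBasisCell G (({s}, insert v {t}) : Cell n) := by
  refine Or.inr ⟨⟨s, Finset.mem_singleton_self s⟩, ⟨v, Finset.mem_insert_self v _⟩, ?_, ?_, ?_⟩
  · rw [Finset.disjoint_left]
    intro x hx
    rw [Finset.mem_singleton] at hx; subst hx
    simp only [Finset.mem_insert, Finset.mem_singleton]
    push_neg
    exact ⟨ne_of_lt (hst.trans htv), ne_of_lt hst⟩
  · intro i hi j hj
    rw [Finset.mem_singleton] at hi; subst hi
    rcases Finset.mem_insert.1 hj with rfl | hj
    · exact hst.trans htv
    · rw [Finset.mem_singleton] at hj; subst hj; exact hst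
  · intro i hi j hj hmin
    rw [Finset.mem_singleton] at hi; subst hi
    rcases Finset.mem_insert.1 hj with rfl | hj
    · exact absurd (hmin t (Finset.mem_insert_of_mem (Finset.mem_singleton_self t))) (not_le.2 htv)
    · rw [Finset.mem_singleton] at hj; subst hj; exact hadj

end Lemmas
section Lemmas2

variable {n : ℕ} {k : Type} [Field k] {G : SimpleGraph (Fin n)}

lemma sym_eq {e : Cell n} (h : IsBasisCell G e) : sym G k e = Finsupp.single e 1 := by
  rw [sym, if_pos h]

lemma isBasisCell_empty : IsBasisCell G ((∅, ∅) : Cell n) := Or.inl rfl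

lemma diffCell_empty : diffCell G k ((∅, ∅) : Cell n) = 0 := by
  rw [diffCell, if_pos isBasisCell_empty]
  norm_num

lemma diffCell_edge {s t : Fin n} (hst : s ≠ t) (hb : IsBasisCell G (({s}, {t}) : Cell n)) :
    diffCell G k (({s}, {t}) : Cell n)
      = Finsupp.single ((∅, ∅) : Cell n) (X s * X t) := by
  rw [diffCell, if_pos hb]
  simp only [Finset.card_singleton, Nat.reduceAdd, if_true]
  have hu : ({s} ∪ {t} : Finset (Fin n)) = {s, t} := by
    ext x; simp [Finset.mem_union]
  rw [hu, Finset.prod_pair hst, sym_eq isBasisCell_empty,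
    Finsupp.smul_single, smul_eq_mul, mul_one]

lemma Dmap_single (e : Cell n) (p : MvPolynomial (Fin n) k) :
    Dmap G k (Finsupp.single e p) = p • diffCell G k e := by
  rw [Dmap, Finsupp.lsum_single, LinearMap.smulRight_apply, LinearMap.id_apply]

lemma FBasis_apply (e : Cell n) (α : Fin n →₀ ℕ) :
    FBasis n k ⟨e, α⟩ = Finsupp.single e (monomial α (1 : k)) := by
  rw [FBasis, Finsupp.coe_basis]
  simp [coe_basisMonomials]

lemma Cmap_single (e : Cell n) (α : Fin n →₀ ℕ) :
    Cmap G k (Finsupp.single e (monomial α (1 : k))) = cMono G k e α := by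
  rw [Cmap, ← FBasis_apply, Module.Basis.constr_basis]

lemma biext_single_single (bf : Cell n → Cell n → Ftot n k) (e₁ e₂ : Cell n)
    (p q : MvPolynomial (Fin n) k) :
    biext k bf (Finsupp.single e₁ p) (Finsupp.single e₂ q) = (p * q) • bf e₁ e₂ := by
  rcases eq_or_ne p 0 with rfl | hp
  · simp [biext]
  rcases eq_or_ne q 0 with rfl | hq
  · simp [biext]
  rw [biext, Finsupp.support_single_ne_zero _ hp, Finsupp.support_single_ne_zero _ hq]
  simp

lemma biext_zero_right (bf : Cell n → Cell n → Ftot n k) (f : Ftot n k) :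
    biext k bf f 0 = 0 := by simp [biext]

lemma biext_zero_left (bf : Cell n → Cell n → Ftot n k) (f : Ftot n k) :
    biext k bf 0 f = 0 := by simp [biext]

end Lemmas2
section Lemmas3

variable {n : ℕ} {k : Type} [Field k] {G : SimpleGraph (Fin n)}

lemma supp_pair {u v : Fin n} (huv : u ≠ v) :
    (Finsupp.single u 1 + Finsupp.single v 1 : Fin n →₀ ℕ).support = {u, v} := by
  rw [Finsupp.support_add_eq]
  · rw [Finsupp.support_single_ne_zero _ one_ne_zero,
      Finsupp.support_single_ne_zero _ one_ne_zero]
    rfl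
  · rw [Finsupp.support_single_ne_zero _ one_ne_zero,
      Finsupp.support_single_ne_zero _ one_ne_zero]
    simpa using huv

lemma pair_apply_ne {u v i : Fin n} (hu : i ≠ u) (hv : i ≠ v) :
    (Finsupp.single u 1 + Finsupp.single v 1 : Fin n →₀ ℕ) i = 0 := by
  rw [Finsupp.add_apply, Finsupp.single_apply, Finsupp.single_apply,
    if_neg (fun h => hu h.symm), if_neg (fun h => hv h.symm)]
  norm_num

lemma pair_sub_left {u v : Fin n} :
    (Finsupp.single u 1 + Finsupp.single v 1 : Fin n →₀ ℕ) - Finsupp.single u 1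
      = Finsupp.single v 1 := by
  rw [add_comm, add_tsub_cancel_right]

lemma pair_sub_right {u v : Fin n} :
    (Finsupp.single u 1 + Finsupp.single v 1 : Fin n →₀ ℕ) - Finsupp.single v 1
      = Finsupp.single u 1 := by
  rw [add_tsub_cancel_right]

lemma DvdSet_pair {u v : Fin n} (huv : u < v) (hadj : G.Adj u v) :
    DvdSet G (Finsupp.single u 1 + Finsupp.single v 1) = {(u, v)} := by
  ext p
  obtain ⟨p1, p2⟩ := p
  simp only [DvdSet, Finset.mem_filter, Finset.mem_univ, true_and, Finset.mem_singleton]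
  constructor
  · rintro ⟨h1, _, h3, h4⟩
    have hp1 : p1 = u ∨ p1 = v := by
      by_contra hc
      push_neg at hc
      rw [pair_apply_ne hc.1 hc.2] at h3
      omega
    have hp2 : p2 = u ∨ p2 = v := by
      by_contra hc
      push_neg at hc
      rw [pair_apply_ne hc.1 hc.2] at h4
      omega
    rcases hp1 with rfl | rfl <;> rcases hp2 with rfl | rfl
    · exact absurd h1 (lt_irrefl _)
    · rfl
    · exact absurd (h1.trans huv) (lt_irrefl _)
    · exact absurd h1 (lt_irrefl _)
  · rintro h
    rw [Prod.mk.injEq] at h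
    obtain ⟨rfl, rfl⟩ := h
    refine ⟨huv, hadj, ?_, ?_⟩
    · rw [Finsupp.add_apply, Finsupp.single_eq_same]; omega
    · rw [Finsupp.add_apply, Finsupp.single_eq_same]; omega

lemma cZero_pair {u v : Fin n} (huv : u < v) (hadj : G.Adj u v) :
    cZero G k (Finsupp.single u 1 + Finsupp.single v 1)
      = Finsupp.single (({u}, {v}) : Cell n) 1 := by
  rw [cZero]
  rw [dif_pos (by rw [DvdSet_pair huv hadj]; exact ⟨(u, v), Finset.mem_singleton_self _⟩)]
  simp only [DvdSet_pair huv hadj, Finset.image_singleton, Finset.max'_singleton,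
    Finset.filter_singleton, if_true, Finset.min'_singleton]
  rw [dif_pos (Finset.singleton_nonempty u)]
  rw [pair_sub_left, tsub_self]
  rw [sym_eq (isBasisCell_pair huv hadj)]
  rw [Finsupp.smul_single, smul_eq_mul, mul_one, monomial_zero', C_1]

lemma cMono_empty (α : Fin n →₀ ℕ) :
    cMono G k ((∅, ∅) : Cell n) α = cZero G k α := by
  rw [cMono, if_pos isBasisCell_empty, dif_neg Finset.not_nonempty_empty]

lemma cellDeg_empty : cellDeg ((∅, ∅) : Cell n) = 0 := by simp [cellDeg]

lemma cellDeg_edge {s t : Fin n} : cellDeg (({s}, {t}) : Cell n) = 1 := by simp [cellDeg]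

lemma X_mul_X {s t : Fin n} :
    (X s * X t : MvPolynomial (Fin n) k)
      = monomial (Finsupp.single s 1 + Finsupp.single t 1) 1 := by
  rw [X, X, monomial_mul, mul_one]

lemma bstar_empty_empty (N : ℕ) (hN : 1 ≤ N) :
    bstar G k N ((∅, ∅) : Cell n) ((∅, ∅) : Cell n)
      = Finsupp.single ((∅, ∅) : Cell n) 1 := by
  obtain ⟨M, rfl⟩ : ∃ M, N = M + 1 := ⟨N - 1, by omega⟩
  rw [bstar, if_pos (by rw [cellDeg_empty])]

lemma bstar_unit_left {s t : Fin n} (hst : s < t) (hadj : G.Adj s t) (N : ℕ) (hN : 2 ≤ N) :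
    bstar G k N ((∅, ∅) : Cell n) (({s}, {t}) : Cell n)
      = Finsupp.single (({s}, {t}) : Cell n) 1 := by
  obtain ⟨M, rfl⟩ : ∃ M, N = M + 1 := ⟨N - 1, by omega⟩
  rw [bstar, if_neg (by rw [cellDeg_empty, cellDeg_edge]; omega)]
  rw [Dmap_single, Dmap_single, diffCell_empty, smul_zero, biext_zero_left, map_zero,
    diffCell_edge (ne_of_lt hst) (isBasisCell_pair hst hadj), one_smul,
    biext_single_single, one_mul, bstar_empty_empty M (by omega),
    Finsupp.smul_single, smul_eq_mul, mul_one, X_mul_X, Cmap_single, cMono_empty,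
    cZero_pair hst hadj, cellDeg_empty, pow_zero, one_smul, zero_add]

lemma bstar_unit_right {s t : Fin n} (hst : s < t) (hadj : G.Adj s t) (N : ℕ) (hN : 2 ≤ N) :
    bstar G k N (({s}, {t}) : Cell n) ((∅, ∅) : Cell n)
      = Finsupp.single (({s}, {t}) : Cell n) 1 := by
  obtain ⟨M, rfl⟩ : ∃ M, N = M + 1 := ⟨N - 1, by omega⟩
  rw [bstar, if_neg (by rw [cellDeg_empty, cellDeg_edge]; omega)]
  rw [Dmap_single, Dmap_single, diffCell_empty, smul_zero, biext_zero_right, map_zero,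
    smul_zero, add_zero, diffCell_edge (ne_of_lt hst) (isBasisCell_pair hst hadj), one_smul,
    biext_single_single, mul_one, bstar_empty_empty M (by omega),
    Finsupp.smul_single, smul_eq_mul, mul_one, X_mul_X, Cmap_single, cMono_empty,
    cZero_pair hst hadj]

lemma bstar_edge_edge {s₁ t₁ s₂ t₂ : Fin n} (h1 : s₁ < t₁) (ha1 : G.Adj s₁ t₁)
    (h2 : s₂ < t₂) (ha2 : G.Adj s₂ t₂) (N : ℕ) (hN : 3 ≤ N) :
    bstar G k N (({s₁}, {t₁}) : Cell n) (({s₂}, {t₂}) : Cell n)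
      = cMono G k (({s₂}, {t₂}) : Cell n) (Finsupp.single s₁ 1 + Finsupp.single t₁ 1)
        - cMono G k (({s₁}, {t₁}) : Cell n) (Finsupp.single s₂ 1 + Finsupp.single t₂ 1) := by
  obtain ⟨M, rfl⟩ : ∃ M, N = M + 1 := ⟨N - 1, by omega⟩
  rw [bstar, if_neg (by rw [cellDeg_edge, cellDeg_edge]; omega)]
  rw [Dmap_single, Dmap_single, one_smul, one_smul,
    diffCell_edge (ne_of_lt h1) (isBasisCell_pair h1 ha1),
    diffCell_edge (ne_of_lt h2) (isBasisCell_pair h2 ha2),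
    biext_single_single, biext_single_single, mul_one, one_mul,
    bstar_unit_left h2 ha2 M (by omega), bstar_unit_right h1 ha1 M (by omega),
    Finsupp.smul_single, Finsupp.smul_single, smul_eq_mul, smul_eq_mul, mul_one, mul_one,
    X_mul_X, X_mul_X, Cmap_single, Cmap_single, cellDeg_edge, pow_one, neg_one_smul,
    sub_eq_add_neg]

lemma pstar_single_single {s₁ t₁ s₂ t₂ : Fin n} (h1 : s₁ < t₁) (ha1 : G.Adj s₁ t₁)
    (h2 : s₂ < t₂) (ha2 : G.Adj s₂ t₂) :
    pstar G k (Finsupp.single (({s₁}, {t₁}) : Cell n) 1) (Finsupp.single (({s₂}, {t₂}) : Cell n) 1)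
      = cMono G k (({s₂}, {t₂}) : Cell n) (Finsupp.single s₁ 1 + Finsupp.single t₁ 1)
        - cMono G k (({s₁}, {t₁}) : Cell n) (Finsupp.single s₂ 1 + Finsupp.single t₂ 1) := by
  rw [pstar, biext_single_single, one_mul, bstar_edge_edge h1 ha1 h2 ha2 _ (by omega), one_smul]

end Lemmas3
section Lemmas4

variable {n : ℕ} {k : Type} [Field k] {G : SimpleGraph (Fin n)}

lemma mem_C1_iff {t i : Fin n} (α : Fin n →₀ ℕ) :
    i ∈ C1set ({t} : Finset (Fin n)) α ↔ i ∈ α.support ∧ t < i := by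
  simp [C1set]

lemma mem_C2_iff {s t i : Fin n} (α : Fin n →₀ ℕ) :
    i ∈ C2set G ({s} : Finset (Fin n)) {t} α ↔ i ∈ α.support ∧ i < s ∧ G.Adj i t := by
  simp [C2set]

lemma mem_C3_iff {u v s : Fin n} (huv : u < v) (i : Fin n) :
    i ∈ C3set G ({s} : Finset (Fin n)) (Finsupp.single u 1 + Finsupp.single v 1) ↔
      (i = u ∨ i = v) ∧ i < s ∧ i < v ∧ G.Adj i v := by
  rw [C3set, Finset.mem_filter, supp_pair (ne_of_lt huv)]
  simp only [Finset.mem_insert, Finset.mem_singleton, forall_eq]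
  constructor
  · rintro ⟨h1, h2, h3⟩
    have hv := h3 v (Or.inr rfl) ?_
    · exact ⟨h1, h2, hv⟩
    · rintro m' (rfl | rfl)
      exacts [le_of_lt huv, le_rfl]
  · rintro ⟨h1, h2, h3, h4⟩
    refine ⟨h1, h2, ?_⟩
    rintro m (rfl | rfl) hm
    · exact absurd (hm v (Or.inr rfl)) (not_le.2 huv)
    · exact ⟨h3, h4⟩

lemma coeff_c3 {u v t : Fin n} :
    (Finsupp.single u 1 + Finsupp.single v 1 + Finsupp.single t 1 : Fin n →₀ ℕ)
      - Finsupp.single v 1 - Finsupp.single u 1 = Finsupp.single t 1 := by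
  rw [add_right_comm, add_tsub_cancel_right, add_comm, add_tsub_cancel_right]

lemma cMono_C1_only {u v s t : Fin n} (huv : u < v) (htv : t < v)
    (hb : IsBasisCell G (({s}, {t}) : Cell n))
    (hb2 : IsBasisCell G (({s}, insert v {t}) : Cell n))
    (hC3 : ¬(u < s ∧ G.Adj u v)) :
    cMono G k (({s}, {t}) : Cell n) (Finsupp.single u 1 + Finsupp.single v 1)
      = Finsupp.single (({s}, insert v {t}) : Cell n) (X u) := by
  have hne := ne_of_lt huv
  set α := (Finsupp.single u 1 + Finsupp.single v 1 : Fin n →₀ ℕ) with hα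
  have hvC1 : v ∈ C1set ({t} : Finset (Fin n)) α := by
    rw [mem_C1_iff, hα, supp_pair hne]
    exact ⟨Finset.mem_insert_of_mem (Finset.mem_singleton_self v), htv⟩
  have h1 : (C1set ({t} : Finset (Fin n)) α).Nonempty := ⟨v, hvC1⟩
  have hmax : (C1set ({t} : Finset (Fin n)) α).max' h1 = v := by
    refine le_antisymm (Finset.max'_le _ _ _ ?_) (Finset.le_max' _ _ hvC1)
    intro y hy
    rw [mem_C1_iff, hα, supp_pair hne] at hy
    rcases Finset.mem_insert.1 hy.1 with rfl | hy1
    · exact le_of_lt huv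
    · rw [Finset.mem_singleton] at hy1; subst hy1; exact le_rfl
  have hC3e : ¬(C3set G ({s} : Finset (Fin n)) α).Nonempty := by
    rintro ⟨i, hi⟩
    rw [hα, mem_C3_iff huv] at hi
    rcases hi.1 with rfl | rfl
    · exact hC3 ⟨hi.2.1, hi.2.2.2⟩
    · exact absurd hi.2.2.1 (lt_irrefl _)
  rw [cMono, if_pos hb, dif_pos (Finset.singleton_nonempty t),
    if_pos (Finset.card_singleton t), dif_pos h1, hmax]
  dsimp only
  rw [dif_neg hC3e, add_zero,
    pair_sub_right, sym_eq hb2, Finsupp.smul_single, smul_eq_mul, mul_one, X]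

lemma cMono_C1C3 {u v s t : Fin n} (huv : u < v) (htv : t < v) (hus : u < s) (hvs : ¬v < s)
    (hadjuv : G.Adj u v)
    (hb : IsBasisCell G (({s}, {t}) : Cell n))
    (hb2 : IsBasisCell G (({s}, insert v {t}) : Cell n))
    (hb3 : IsBasisCell G ((insert u {s}, {v}) : Cell n)) :
    cMono G k (({s}, {t}) : Cell n) (Finsupp.single u 1 + Finsupp.single v 1)
      = Finsupp.single (({s}, insert v {t}) : Cell n) (X u)
        + Finsupp.single ((insert u {s}, {v}) : Cell n) (X t) := by
  have hne := ne_of_lt huv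
  set α := (Finsupp.single u 1 + Finsupp.single v 1 : Fin n →₀ ℕ) with hα
  have hvC1 : v ∈ C1set ({t} : Finset (Fin n)) α := by
    rw [mem_C1_iff, hα, supp_pair hne]
    exact ⟨Finset.mem_insert_of_mem (Finset.mem_singleton_self v), htv⟩
  have h1 : (C1set ({t} : Finset (Fin n)) α).Nonempty := ⟨v, hvC1⟩
  have hmax : (C1set ({t} : Finset (Fin n)) α).max' h1 = v := by
    refine le_antisymm (Finset.max'_le _ _ _ ?_) (Finset.le_max' _ _ hvC1)
    intro y hy
    rw [mem_C1_iff, hα, supp_pair hne] at hy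
    rcases Finset.mem_insert.1 hy.1 with rfl | hy1
    · exact le_of_lt huv
    · rw [Finset.mem_singleton] at hy1; subst hy1; exact le_rfl
  have huC3 : u ∈ C3set G ({s} : Finset (Fin n)) α := by
    rw [hα, mem_C3_iff huv]
    exact ⟨Or.inl rfl, hus, huv, hadjuv⟩
  have h3 : (C3set G ({s} : Finset (Fin n)) α).Nonempty := ⟨u, huC3⟩
  have hmin : (C3set G ({s} : Finset (Fin n)) α).min' h3 = u := by
    refine le_antisymm (Finset.min'_le _ _ huC3) (Finset.le_min' _ _ _ ?_)
    intro y hy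
    rw [hα, mem_C3_iff huv] at hy
    rcases hy.1 with rfl | rfl
    · exact le_rfl
    · exact absurd hy.2.2.1 (lt_irrefl _)
  rw [cMono, if_pos hb, dif_pos (Finset.singleton_nonempty t),
    if_pos (Finset.card_singleton t), dif_pos h1, hmax]
  dsimp only
  rw [dif_pos h3, hmin,
    Finset.max'_singleton, pair_sub_right, hα, coeff_c3,
    sym_eq hb2, sym_eq hb3, Finsupp.smul_single, Finsupp.smul_single, smul_eq_mul, mul_one,
    Finset.card_singleton, Finsupp.smul_single]
  norm_num
  rw [X, X]

lemma cMono_C2_only {u v s t : Fin n} (huv : u < v) (hut : ¬t < u) (hvt : ¬t < v)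
    (hus : u < s) (hadjut : G.Adj u t)
    (hb : IsBasisCell G (({s}, {t}) : Cell n))
    (hb3 : IsBasisCell G ((insert u {s}, {t}) : Cell n)) :
    cMono G k (({s}, {t}) : Cell n) (Finsupp.single u 1 + Finsupp.single v 1)
      = Finsupp.single ((insert u {s}, {t}) : Cell n) (X v) := by
  have hne := ne_of_lt huv
  set α := (Finsupp.single u 1 + Finsupp.single v 1 : Fin n →₀ ℕ) with hα
  have hC1e : ¬(C1set ({t} : Finset (Fin n)) α).Nonempty := by
    rintro ⟨i, hi⟩
    rw [mem_C1_iff, hα, supp_pair hne] at hi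
    rcases Finset.mem_insert.1 hi.1 with rfl | hi1
    · exact hut hi.2
    · rw [Finset.mem_singleton] at hi1; subst hi1; exact hvt hi.2
  have huC2 : u ∈ C2set G ({s} : Finset (Fin n)) {t} α := by
    rw [mem_C2_iff, hα, supp_pair hne]
    exact ⟨Finset.mem_insert_self u _, hus, hadjut⟩
  have h2 : (C2set G ({s} : Finset (Fin n)) {t} α).Nonempty := ⟨u, huC2⟩
  have hmin : (C2set G ({s} : Finset (Fin n)) {t} α).min' h2 = u := by
    refine le_antisymm (Finset.min'_le _ _ huC2) (Finset.le_min' _ _ _ ?_)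
    intro y hy
    rw [mem_C2_iff, hα, supp_pair hne] at hy
    rcases Finset.mem_insert.1 hy.1 with rfl | hy1
    · exact le_rfl
    · rw [Finset.mem_singleton] at hy1; subst hy1; exact le_of_lt huv
  rw [cMono, if_pos hb, dif_pos (Finset.singleton_nonempty t),
    if_pos (Finset.card_singleton t), dif_neg hC1e]
  dsimp only
  rw [dif_pos h2, hmin,
    pair_sub_left, sym_eq hb3, Finsupp.smul_single, smul_eq_mul, mul_one,
    Finset.card_singleton, Finsupp.smul_single]
  norm_num
  rw [X]

lemma cMono_zero {u v s t : Fin n} (huv : u < v) (hut : ¬t < u) (hvt : ¬t < v)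
    (hu2 : ¬(u < s ∧ G.Adj u t)) (hv2 : ¬(v < s ∧ G.Adj v t))
    (hb : IsBasisCell G (({s}, {t}) : Cell n)) :
    cMono G k (({s}, {t}) : Cell n) (Finsupp.single u 1 + Finsupp.single v 1) = 0 := by
  have hne := ne_of_lt huv
  set α := (Finsupp.single u 1 + Finsupp.single v 1 : Fin n →₀ ℕ) with hα
  have hC1e : ¬(C1set ({t} : Finset (Fin n)) α).Nonempty := by
    rintro ⟨i, hi⟩
    rw [mem_C1_iff, hα, supp_pair hne] at hi
    rcases Finset.mem_insert.1 hi.1 with rfl | hi1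
    · exact hut hi.2
    · rw [Finset.mem_singleton] at hi1; subst hi1; exact hvt hi.2
  have hC2e : ¬(C2set G ({s} : Finset (Fin n)) {t} α).Nonempty := by
    rintro ⟨i, hi⟩
    rw [mem_C2_iff, hα, supp_pair hne] at hi
    rcases Finset.mem_insert.1 hi.1 with rfl | hi1
    · exact hu2 hi.2
    · rw [Finset.mem_singleton] at hi1; subst hi1; exact hv2 hi.2
  rw [cMono, if_pos hb, dif_pos (Finset.singleton_nonempty t),
    if_pos (Finset.card_singleton t), dif_neg hC1e]
  dsimp only
  rw [dif_neg hC2e]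

end Lemmas4
section Lemmas5

variable {n : ℕ} {k : Type} [Field k] {G : SimpleGraph (Fin n)}

lemma cellDeg_one_two {s t v : Fin n} (h : v ≠ t) :
    cellDeg (({s}, insert v {t}) : Cell n) = 2 := by
  rw [cellDeg]
  rw [Finset.card_insert_of_notMem (by simpa using h)]
  simp

lemma cellDeg_two_one {u s t : Fin n} (h : u ≠ s) :
    cellDeg ((insert u {s}, {t}) : Cell n) = 2 := by
  rw [cellDeg]
  rw [Finset.card_insert_of_notMem (by simpa using h)]
  simp

lemma InB_one_two {s t v : Fin n} (hst : s < t) (htv : t < v) (hadj : G.Adj s t) :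
    InB G 2 (({s}, insert v {t}) : Cell n) :=
  ⟨isBasisCell_one_two hst htv hadj, cellDeg_one_two (ne_of_gt htv)⟩

lemma InB_two_one {u s t : Fin n} (hus : u ≠ s) (hut : u < t) (hst : s < t)
    (hadju : G.Adj u t) (hadjs : G.Adj s t) :
    InB G 2 ((insert u {s}, {t}) : Cell n) :=
  ⟨isBasisCell_two_one hus hut hst hadju hadjs, cellDeg_two_one hus⟩

end Lemmas5
theorem stmt11 (n : ℕ) (hn : 1 ≤ n) (a b : Fin n → ℝ)
    (hab : ∀ i, a i ≤ b i) (hmono : ∀ i j : Fin n, i < j → a i ≤ a j)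
    (k : Type) [Field k]
    (s₁ t₁ s₂ t₂ : Fin n)
    (hst₁ : s₁ < t₁) (hadj₁ : (cigraph n a b).Adj s₁ t₁)
    (hst₂ : s₂ < t₂) (hadj₂ : (cigraph n a b).Adj s₂ t₂) :
    (t₂ < t₁ → s₁ < s₂ →
      pstar (cigraph n a b) k (Finsupp.single (({s₁}, {t₁}) : Cell n) 1) (Finsupp.single (({s₂}, {t₂}) : Cell n) 1) =
        Finsupp.single (({s₂}, {t₂, t₁}) : Cell n) ((X s₁ : MvPolynomial (Fin n) k))
        + Finsupp.single (({s₁, s₂}, {t₁}) : Cell n) ((X t₂ : MvPolynomial (Fin n) k))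
      ∧ InB (cigraph n a b) 2 (({s₂}, {t₂, t₁}) : Cell n) ∧ InB (cigraph n a b) 2 (({s₁, s₂}, {t₁}) : Cell n))
    ∧ (t₂ < t₁ → s₁ = s₂ →
      pstar (cigraph n a b) k (Finsupp.single (({s₁}, {t₁}) : Cell n) 1) (Finsupp.single (({s₂}, {t₂}) : Cell n) 1) = Finsupp.single (({s₂}, {t₂, t₁}) : Cell n) ((X s₁ : MvPolynomial (Fin n) k))
      ∧ InB (cigraph n a b) 2 (({s₂}, {t₂, t₁}) : Cell n))
    ∧ (t₂ < t₁ → s₂ < s₁ →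
      pstar (cigraph n a b) k (Finsupp.single (({s₁}, {t₁}) : Cell n) 1) (Finsupp.single (({s₂}, {t₂}) : Cell n) 1) =
        Finsupp.single (({s₂}, {t₂, t₁}) : Cell n) ((X s₁ : MvPolynomial (Fin n) k))
        - Finsupp.single (({s₂, s₁}, {t₁}) : Cell n) ((X t₂ : MvPolynomial (Fin n) k))
      ∧ InB (cigraph n a b) 2 (({s₂}, {t₂, t₁}) : Cell n) ∧ InB (cigraph n a b) 2 (({s₂, s₁}, {t₁}) : Cell n))
    ∧ (t₁ = t₂ → s₁ < s₂ →
      pstar (cigraph n a b) k (Finsupp.single (({s₁}, {t₁}) : Cell n) 1) (Finsupp.single (({s₂}, {t₂}) : Cell n) 1) = Finsupp.single (({s₁, s₂}, {t₂}) : Cell n) ((X t₁ : MvPolynomial (Fin n) k))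
      ∧ InB (cigraph n a b) 2 (({s₁, s₂}, {t₂}) : Cell n))
    ∧ (t₁ = t₂ → s₁ = s₂ → pstar (cigraph n a b) k (Finsupp.single (({s₁}, {t₁}) : Cell n) 1) (Finsupp.single (({s₂}, {t₂}) : Cell n) 1) = 0)
    ∧ (t₁ = t₂ → s₂ < s₁ →
      pstar (cigraph n a b) k (Finsupp.single (({s₁}, {t₁}) : Cell n) 1) (Finsupp.single (({s₂}, {t₂}) : Cell n) 1) = -Finsupp.single (({s₂, s₁}, {t₁}) : Cell n) ((X t₂ : MvPolynomial (Fin n) k))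
      ∧ InB (cigraph n a b) 2 (({s₂, s₁}, {t₁}) : Cell n))
    ∧ (t₁ < t₂ → s₁ < s₂ →
      pstar (cigraph n a b) k (Finsupp.single (({s₁}, {t₁}) : Cell n) 1) (Finsupp.single (({s₂}, {t₂}) : Cell n) 1) =
        Finsupp.single (({s₁, s₂}, {t₂}) : Cell n) ((X t₁ : MvPolynomial (Fin n) k))
        - Finsupp.single (({s₁}, {t₁, t₂}) : Cell n) ((X s₂ : MvPolynomial (Fin n) k))
      ∧ InB (cigraph n a b) 2 (({s₁, s₂}, {t₂}) : Cell n) ∧ InB (cigraph n a b) 2 (({s₁}, {t₁, t₂}) : Cell n))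
    ∧ (t₁ < t₂ → s₁ = s₂ →
      pstar (cigraph n a b) k (Finsupp.single (({s₁}, {t₁}) : Cell n) 1) (Finsupp.single (({s₂}, {t₂}) : Cell n) 1) = -Finsupp.single (({s₁}, {t₁, t₂}) : Cell n) ((X s₂ : MvPolynomial (Fin n) k))
      ∧ InB (cigraph n a b) 2 (({s₁}, {t₁, t₂}) : Cell n))
    ∧ (t₁ < t₂ → s₂ < s₁ →
      pstar (cigraph n a b) k (Finsupp.single (({s₁}, {t₁}) : Cell n) 1) (Finsupp.single (({s₂}, {t₂}) : Cell n) 1) =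
        -Finsupp.single (({s₁}, {t₁, t₂}) : Cell n) ((X s₂ : MvPolynomial (Fin n) k))
        - Finsupp.single (({s₂, s₁}, {t₂}) : Cell n) ((X t₁ : MvPolynomial (Fin n) k))
      ∧ InB (cigraph n a b) 2 (({s₁}, {t₁, t₂}) : Cell n) ∧ InB (cigraph n a b) 2 (({s₂, s₁}, {t₂}) : Cell n)) := by
  have hT21 : t₂ < t₁ → (cigraph n a b).Adj s₂ t₁ := fun h => adj_mono hab hmono hadj₂ hst₂ h.le
  have hT12 : t₁ < t₂ → (cigraph n a b).Adj s₁ t₂ := fun h => adj_mono hab hmono hadj₁ hst₁ h.le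
  have hP := pstar_single_single (k := k) hst₁ hadj₁ hst₂ hadj₂
  refine ⟨?_, ?_, ?_, ?_, ?_, ?_, ?_, ?_, ?_⟩
  · -- t₂ < t₁, s₁ < s₂
    intro ht hs
    refine ⟨?_, ?_, ?_⟩
    · rw [hP,
        cMono_C1C3 hst₁ ht hs (not_lt.2 (hst₂.trans ht).le) hadj₁
          (isBasisCell_pair hst₂ hadj₂) (isBasisCell_one_two hst₂ ht hadj₂)
          (isBasisCell_two_one (ne_of_lt hs) hst₁ (hst₂.trans ht) hadj₁ (hT21 ht)),
        cMono_zero hst₂ (not_lt.2 (hst₂.trans ht).le) (not_lt.2 ht.le)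
          (fun h => lt_asymm hs h.1) (fun h => lt_asymm (hs.trans hst₂) h.1)
          (isBasisCell_pair hst₁ hadj₁),
        sub_zero, Finset.pair_comm t₁ t₂]
    · rw [show ({t₂, t₁} : Finset (Fin n)) = {t₁, t₂} from Finset.pair_comm _ _]
      exact InB_one_two hst₂ ht hadj₂
    · exact InB_two_one (ne_of_lt hs) hst₁ (hst₂.trans ht) hadj₁ (hT21 ht)
  · -- t₂ < t₁, s₁ = s₂
    intro ht hs
    subst hs
    refine ⟨?_, ?_⟩
    · rw [hP,
        cMono_C1_only hst₁ ht (isBasisCell_pair hst₂ hadj₂)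
          (isBasisCell_one_two hst₂ ht hadj₂) (fun h => lt_irrefl _ h.1),
        cMono_zero hst₂ (not_lt.2 hst₁.le) (not_lt.2 ht.le)
          (fun h => lt_irrefl _ h.1) (fun h => lt_asymm hst₂ h.1)
          (isBasisCell_pair hst₁ hadj₁),
        sub_zero, Finset.pair_comm t₁ t₂]
    · rw [show ({t₂, t₁} : Finset (Fin n)) = {t₁, t₂} from Finset.pair_comm _ _]
      exact InB_one_two hst₂ ht hadj₂
  · -- t₂ < t₁, s₂ < s₁
    intro ht hs
    refine ⟨?_, ?_, ?_⟩
    · rw [hP,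
        cMono_C1_only hst₁ ht (isBasisCell_pair hst₂ hadj₂)
          (isBasisCell_one_two hst₂ ht hadj₂) (fun h => lt_asymm hs h.1),
        cMono_C2_only hst₂ (not_lt.2 (hs.trans hst₁).le) (not_lt.2 ht.le) hs (hT21 ht)
          (isBasisCell_pair hst₁ hadj₁)
          (isBasisCell_two_one (ne_of_lt hs) (hs.trans hst₁) hst₁ (hT21 ht) hadj₁),
        Finset.pair_comm t₁ t₂]
    · rw [show ({t₂, t₁} : Finset (Fin n)) = {t₁, t₂} from Finset.pair_comm _ _]
      exact InB_one_two hst₂ ht hadj₂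
    · exact InB_two_one (ne_of_lt hs) (hs.trans hst₁) hst₁ (hT21 ht) hadj₁
  · -- t₁ = t₂, s₁ < s₂
    intro ht hs
    subst ht
    refine ⟨?_, ?_⟩
    · rw [hP,
        cMono_C2_only hst₁ (not_lt.2 hst₁.le) (lt_irrefl t₁) hs hadj₁
          (isBasisCell_pair hst₂ hadj₂)
          (isBasisCell_two_one (ne_of_lt hs) hst₁ hst₂ hadj₁ hadj₂),
        cMono_zero hst₂ (not_lt.2 hst₂.le) (lt_irrefl t₁)
          (fun h => lt_asymm hs h.1) (fun h => lt_asymm hst₁ h.1)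
          (isBasisCell_pair hst₁ hadj₁),
        sub_zero]
    · exact InB_two_one (ne_of_lt hs) hst₁ hst₂ hadj₁ hadj₂
  · -- t₁ = t₂, s₁ = s₂
    intro ht hs
    subst ht; subst hs
    rw [hP, sub_self]
  · -- t₁ = t₂, s₂ < s₁
    intro ht hs
    subst ht
    refine ⟨?_, ?_⟩
    · rw [hP,
        cMono_zero hst₁ (not_lt.2 hst₁.le) (lt_irrefl t₁)
          (fun h => lt_asymm hs h.1) (fun h => lt_asymm hst₂ h.1)
          (isBasisCell_pair hst₂ hadj₂),
        cMono_C2_only hst₂ (not_lt.2 hst₂.le) (lt_irrefl t₁) hs hadj₂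
          (isBasisCell_pair hst₁ hadj₁)
          (isBasisCell_two_one (ne_of_lt hs) hst₂ hst₁ hadj₂ hadj₁),
        zero_sub]
    · exact InB_two_one (ne_of_lt hs) hst₂ hst₁ hadj₂ hadj₁
  · -- t₁ < t₂, s₁ < s₂
    intro ht hs
    refine ⟨?_, ?_, ?_⟩
    · rw [hP,
        cMono_C2_only hst₁ (not_lt.2 (hst₁.trans ht).le) (not_lt.2 ht.le) hs (hT12 ht)
          (isBasisCell_pair hst₂ hadj₂)
          (isBasisCell_two_one (ne_of_lt hs) (hst₁.trans ht) hst₂ (hT12 ht) hadj₂),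
        cMono_C1_only hst₂ ht (isBasisCell_pair hst₁ hadj₁)
          (isBasisCell_one_two hst₁ ht hadj₁) (fun h => lt_asymm hs h.1),
        Finset.pair_comm t₂ t₁]
    · exact InB_two_one (ne_of_lt hs) (hst₁.trans ht) hst₂ (hT12 ht) hadj₂
    · rw [show ({t₁, t₂} : Finset (Fin n)) = {t₂, t₁} from Finset.pair_comm _ _]
      exact InB_one_two hst₁ ht hadj₁
  · -- t₁ < t₂, s₁ = s₂
    intro ht hs
    subst hs
    refine ⟨?_, ?_⟩
    · rw [hP,
        cMono_zero hst₁ (not_lt.2 (hst₁.trans ht).le) (not_lt.2 ht.le)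
          (fun h => lt_irrefl _ h.1) (fun h => lt_asymm hst₁ h.1)
          (isBasisCell_pair hst₂ hadj₂),
        cMono_C1_only hst₂ ht (isBasisCell_pair hst₁ hadj₁)
          (isBasisCell_one_two hst₁ ht hadj₁) (fun h => lt_irrefl _ h.1),
        zero_sub, Finset.pair_comm t₂ t₁]
    · rw [show ({t₁, t₂} : Finset (Fin n)) = {t₂, t₁} from Finset.pair_comm _ _]
      exact InB_one_two hst₁ ht hadj₁
  · -- t₁ < t₂, s₂ < s₁
    intro ht hs
    refine ⟨?_, ?_, ?_⟩
    · rw [hP,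
        cMono_zero hst₁ (not_lt.2 (hst₁.trans ht).le) (not_lt.2 ht.le)
          (fun h => lt_asymm hs h.1) (fun h => lt_asymm (hs.trans hst₁) h.1)
          (isBasisCell_pair hst₂ hadj₂),
        cMono_C1C3 hst₂ ht hs (not_lt.2 (hst₁.trans ht).le) hadj₂
          (isBasisCell_pair hst₁ hadj₁) (isBasisCell_one_two hst₁ ht hadj₁)
          (isBasisCell_two_one (ne_of_lt hs) hst₂ (hst₁.trans ht) hadj₂ (hT12 ht)),
        zero_sub, neg_add, Finset.pair_comm t₂ t₁, sub_eq_add_neg]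
    · rw [show ({t₁, t₂} : Finset (Fin n)) = {t₂, t₁} from Finset.pair_comm _ _]
      exact InB_one_two hst₁ ht hadj₁
    · exact InB_two_one (ne_of_lt hs) hst₂ (hst₁.trans ht) hadj₂ (hT12 ht)

end EdgeRes
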